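/- Combined asymptotic correctness of the derivative block: with smooth input e(t) = x_{E+}(t) − x_{E−}(t) having bounded second derivative on [0,T], the quasi-steady-state output z(t) = v·(r·x_{E+}(t) − x_{A+}(t)) − v·(r·x_{E−}(t) − x_{A−}(t)) satisfies |z(t) − r·∂t e(t)| ≤ v·C·e^{−v·t} + r·M₂/v for constants C depending on initial conditions and M₂ bounding |∂t² e|, so z converges to r·∂t e uniformly on [δ, T] for any δ > 0 as v → ∞. -/

import Mathlib

/-- Combined asymptotic correctness of the derivative block: the quasi-steady-state
output z tracks r·∂t e with error  v·C·e^{-v·t} + r·M₂/v  on [0,T]. -/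
theorem derivative_block_asymptotic_correct
    (xEp xEm xAp xAm z e e' e'' : ℝ → ℝ) (r v M2 T : ℝ)
    (hr : 0 ≤ r) (hv : 0 < v) (hM2 : 0 ≤ M2) (hT : 0 ≤ T)
    (hEp_nonneg : ∀ t ∈ Set.Icc (0:ℝ) T, 0 ≤ xEp t)
    (hEm_nonneg : ∀ t ∈ Set.Icc (0:ℝ) T, 0 ≤ xEm t)
    (he : ∀ t, e t = xEp t - xEm t)
    (he' : ∀ t ∈ Set.Icc (0:ℝ) T, HasDerivAt e (e' t) t)
    (he'' : ∀ t ∈ Set.Icc (0:ℝ) T, HasDerivAt e' (e'' t) t)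
    (he''_bdd : ∀ t ∈ Set.Icc (0:ℝ) T, |e'' t| ≤ M2)
    (hAp : ∀ t ∈ Set.Icc (0:ℝ) T, HasDerivAt xAp (v * r * xEp t - v * xAp t) t)
    (hAm : ∀ t ∈ Set.Icc (0:ℝ) T, HasDerivAt xAm (v * r * xEm t - v * xAm t) t)
    (hz : ∀ t, z t = v * (r * xEp t - xAp t) - v * (r * xEm t - xAm t)) :
    ∀ t ∈ Set.Icc (0:ℝ) T,
      |z t - r * e' t| ≤
        v * (|xAp 0 - r * xEp 0| + |xAm 0 - r * xEm 0| + r * |e' 0| / v)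
          * Real.exp (-v * t) + r * M2 / v := by
  intro t ht
  have hvne : v ≠ 0 := ne_of_gt hv
  -- u s = v*(r*e s - (xAp s - xAm s)) - r * e' s
  -- w s = exp(v s) * u s,  g s = (r*M2/v) * exp(v s)
  have hu : ∀ s ∈ Set.Icc (0:ℝ) T,
      HasDerivAt (fun s => v * (r * e s - (xAp s - xAm s)) - r * e' s)
        (v * (r * e' s - ((v * r * xEp s - v * xAp s) - (v * r * xEm s - v * xAm s)))
          - r * e'' s) s := by
    intro s hs
    exact ((((he' s hs).const_mul r).sub ((hAp s hs).sub (hAm s hs))).const_mul v).sub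
      ((he'' s hs).const_mul r)
  have hexp : ∀ s : ℝ, HasDerivAt (fun s => Real.exp (v * s)) (Real.exp (v * s) * v) s := by
    intro s
    simpa using (((hasDerivAt_id s).const_mul v).exp)
  have hw : ∀ s ∈ Set.Icc (0:ℝ) T,
      HasDerivAt (fun s => Real.exp (v * s) * (v * (r * e s - (xAp s - xAm s)) - r * e' s))
        (Real.exp (v * s) * (-(r * e'' s))) s := by
    intro s hs
    have : HasDerivAt (fun s => Real.exp (v * s) * (v * (r * e s - (xAp s - xAm s)) - r * e' s)) _ s := (hexp s).mul (hu s hs)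
    convert this using 1
    have hes := he s
    ring_nf
    rw [hes]
    ring
  have hg : ∀ s : ℝ, HasDerivAt (fun s => (r * M2 / v) * Real.exp (v * s))
      (r * M2 * Real.exp (v * s)) s := by
    intro s
    have : HasDerivAt (fun s => (r * M2 / v) * Real.exp (v * s)) _ s := (hexp s).const_mul (r * M2 / v)
    convert this using 1
    field_simp
  -- monotone auxiliary functions
  set w : ℝ → ℝ := fun s => Real.exp (v * s) * (v * (r * e s - (xAp s - xAm s)) - r * e' s)
    with hwdef
  set g : ℝ → ℝ := fun s => (r * M2 / v) * Real.exp (v * s) with hgdef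
  have key : ∀ (σ : ℝ), (σ = 1 ∨ σ = -1) → MonotoneOn (fun s => g s + σ * w s)
      (Set.Icc (0:ℝ) T) := by
    intro σ hσ
    apply monotoneOn_of_deriv_nonneg (convex_Icc 0 T)
    · intro s hs
      exact (((hg s).add ((hw s hs).const_mul σ)).continuousAt).continuousWithinAt
    · intro s hs
      rw [interior_Icc] at hs
      exact (((hg s).add ((hw s (Set.mem_Icc_of_Ioo hs)).const_mul σ)).differentiableAt).differentiableWithinAt
    · intro s hs
      rw [interior_Icc] at hs
      have hs' : s ∈ Set.Icc (0:ℝ) T := Set.mem_Icc_of_Ioo hs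
      have hd : HasDerivAt (fun s => g s + σ * w s) _ s := (hg s).add ((hw s hs').const_mul σ)
      rw [hd.deriv]
      have hb := he''_bdd s hs'
      rw [abs_le] at hb
      have hep : (0:ℝ) < Real.exp (v * s) := Real.exp_pos _
      rcases hσ with h | h <;> subst h <;> nlinarith [mul_le_mul_of_nonneg_left hb.1 hr,
        mul_le_mul_of_nonneg_left hb.2 hr]
  have ht0 : (0:ℝ) ∈ Set.Icc (0:ℝ) T := Set.mem_Icc.2 ⟨le_rfl, hT⟩
  have h1 := key 1 (Or.inl rfl) ht0 ht ht.1
  have h2 := key (-1) (Or.inr rfl) ht0 ht ht.1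
  simp only [one_mul, neg_one_mul] at h1 h2
  -- |w t - w 0| ≤ g t - g 0
  have habs : |w t| ≤ |w 0| + (g t - g 0) := by
    have := abs_sub_abs_le_abs_sub (w t) (w 0)
    have h3 : |w t - w 0| ≤ g t - g 0 := abs_sub_le_iff.2 ⟨by linarith, by linarith⟩
    linarith
  have hgt : g t - g 0 ≤ g t := by
    have : 0 ≤ g 0 := by
      simp only [hgdef]
      positivity
    linarith
  -- rewrite goal
  have hzt : z t - r * e' t = v * (r * e t - (xAp t - xAm t)) - r * e' t := by
    rw [hz t, he t]; ring
  have hwt : z t - r * e' t = Real.exp (-(v * t)) * w t := by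
    rw [hzt, hwdef]
    simp only
    rw [← mul_assoc, ← Real.exp_add]
    simp
  have hw0 : |w 0| ≤ v * |xAp 0 - r * xEp 0| + v * |xAm 0 - r * xEm 0| + r * |e' 0| := by
    have : w 0 = v * (r * xEp 0 - xAp 0) + v * (xAm 0 - r * xEm 0) + (-(r * e' 0)) := by
      simp only [hwdef, he 0]
      simp
      ring
    rw [this]
    calc |v * (r * xEp 0 - xAp 0) + v * (xAm 0 - r * xEm 0) + -(r * e' 0)|
        ≤ |v * (r * xEp 0 - xAp 0) + v * (xAm 0 - r * xEm 0)| + |-(r * e' 0)| := abs_add_le _ _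
      _ ≤ |v * (r * xEp 0 - xAp 0)| + |v * (xAm 0 - r * xEm 0)| + |-(r * e' 0)| := by
          linarith [abs_add_le (v * (r * xEp 0 - xAp 0)) (v * (xAm 0 - r * xEm 0))]
      _ = v * |xAp 0 - r * xEp 0| + v * |xAm 0 - r * xEm 0| + r * |e' 0| := by
          rw [abs_mul, abs_mul, abs_neg, abs_mul, abs_of_pos hv, abs_of_nonneg hr,
            abs_sub_comm (r * xEp 0), abs_sub_comm (xAm 0)]
  have hept : (0:ℝ) < Real.exp (-(v * t)) := Real.exp_pos _
  calc |z t - r * e' t| = Real.exp (-(v * t)) * |w t| := by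
        rw [hwt, abs_mul, abs_of_pos hept]
    _ ≤ Real.exp (-(v * t)) * (|w 0| + g t) := by
        apply mul_le_mul_of_nonneg_left _ (le_of_lt hept)
        linarith
    _ ≤ Real.exp (-(v * t)) * ((v * |xAp 0 - r * xEp 0| + v * |xAm 0 - r * xEm 0| + r * |e' 0|)
          + g t) := by
        apply mul_le_mul_of_nonneg_left _ (le_of_lt hept)
        linarith
    _ = v * (|xAp 0 - r * xEp 0| + |xAm 0 - r * xEm 0| + r * |e' 0| / v)
          * Real.exp (-v * t) + r * M2 / v := by
        simp only [hgdef]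
        rw [mul_add]
        have : Real.exp (-(v * t)) * (r * M2 / v * Real.exp (v * t)) = r * M2 / v := by
          rw [show Real.exp (-(v * t)) * (r * M2 / v * Real.exp (v * t))
            = (Real.exp (-(v * t)) * Real.exp (v * t)) * (r * M2 / v) by ring,
            ← Real.exp_add]
          simp
        rw [this, neg_mul]
        have h4 : v * (|xAp 0 - r * xEp 0| + |xAm 0 - r * xEm 0| + r * |e' 0| / v)
            = v * |xAp 0 - r * xEp 0| + v * |xAm 0 - r * xEm 0| + r * |e' 0| := by
          field_simp
        rw [h4]
        ring
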